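/- Let A be a unital complex Banach algebra, a, b ∈ A, and κ, λ ∈ ℂ with κ + λ = 1. Then for every t ≥ 0, lim_{n→∞} (κ·exp(ta/n) + λ·exp(tb/n))^n = exp(t(κa + λb)) in the norm of A. -/

import Mathlib

open Filter NormedSpace Finset

section AuxTrotter

variable {A : Type*} [NormedRing A] [NormOneClass A] [NormedAlgebra ℂ A] [CompleteSpace A]

omit [NormOneClass A] [NormedAlgebra ℂ A] [CompleteSpace A] in
lemma aux_hasSum_norm_le {f : ℕ → A} {S : A} {g : ℕ → ℝ} {G : ℝ}
    (hf : HasSum f S) (hg : HasSum g G) (hb : ∀ n, ‖f n‖ ≤ g n) : ‖S‖ ≤ G := by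
  have hs : Summable fun n => ‖f n‖ :=
    Summable.of_nonneg_of_le (fun n => norm_nonneg _) hb hg.summable
  calc ‖S‖ = ‖∑' n, f n‖ := by rw [hf.tsum_eq]
    _ ≤ ∑' n, ‖f n‖ := norm_tsum_le_tsum_norm hs
    _ ≤ ∑' n, g n := Summable.tsum_le_tsum hb hs hg.summable
    _ = G := hg.tsum_eq

omit [CompleteSpace A] in
lemma aux_term_bound (x : A) (k n : ℕ) :
    ‖((Nat.factorial (n + k) : ℂ))⁻¹ • x ^ (n + k)‖
      ≤ ‖x‖ ^ k * (‖x‖ ^ n / Nat.factorial n) := by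
  rw [norm_smul]
  have h1 : ‖((Nat.factorial (n + k) : ℂ))⁻¹‖ = ((Nat.factorial (n + k) : ℝ))⁻¹ := by
    rw [norm_inv]; norm_num
  rw [h1]
  calc ((Nat.factorial (n + k) : ℝ))⁻¹ * ‖x ^ (n + k)‖
      ≤ ((Nat.factorial n : ℝ))⁻¹ * ‖x‖ ^ (n + k) := by
        apply mul_le_mul
        · apply inv_anti₀
          · positivity
          · exact_mod_cast Nat.factorial_le (Nat.le_add_right n k)
        · exact norm_pow_le x (n + k)
        · positivity
        · positivity
    _ = ‖x‖ ^ k * (‖x‖ ^ n / Nat.factorial n) := by rw [pow_add]; ring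

omit [NormOneClass A] in
lemma aux_hasSum_shift (x : A) (k : ℕ) :
    HasSum (fun n => ((Nat.factorial (n + k) : ℂ))⁻¹ • x ^ (n + k))
      (exp x - ∑ i ∈ range k, ((Nat.factorial i : ℂ))⁻¹ • x ^ i) :=
  (hasSum_nat_add_iff' k).mpr (exp_series_hasSum_exp' x)

omit [NormOneClass A] [NormedAlgebra ℂ A] [CompleteSpace A] in
lemma aux_hasSum_real (x : A) (k : ℕ) :
    HasSum (fun n => ‖x‖ ^ k * (‖x‖ ^ n / Nat.factorial n)) (‖x‖ ^ k * Real.exp ‖x‖) := by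
  have := (expSeries_div_hasSum_exp (‖x‖)).mul_left (‖x‖ ^ k)
  rwa [Real.exp_eq_exp_ℝ]

lemma aux_norm_exp_le (x : A) : ‖exp x‖ ≤ Real.exp ‖x‖ := by
  have h := aux_hasSum_shift x 0
  simp only [range_zero, sum_empty, sub_zero, add_zero] at h
  simpa using
    aux_hasSum_norm_le h (aux_hasSum_real x 0) (fun n => by simpa using aux_term_bound x 0 n)

lemma aux_norm_exp_sub_one_le (x : A) : ‖exp x - 1‖ ≤ ‖x‖ * Real.exp ‖x‖ := by
  have h := aux_hasSum_shift x 1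
  simp only [range_one, sum_singleton, Nat.factorial_zero, Nat.cast_one, inv_one, pow_zero,
    one_smul] at h
  simpa using aux_hasSum_norm_le h (aux_hasSum_real x 1) (fun n => aux_term_bound x 1 n)

lemma aux_norm_exp_sub_one_sub_le (x : A) :
    ‖exp x - 1 - x‖ ≤ ‖x‖ ^ 2 * Real.exp ‖x‖ := by
  have h := aux_hasSum_shift x 2
  have hr : ∑ i ∈ range 2, ((Nat.factorial i : ℂ))⁻¹ • x ^ i = 1 + x := by
    simp [Finset.sum_range_succ]
  rw [hr, sub_add_eq_sub_sub] at h
  exact aux_hasSum_norm_le h (aux_hasSum_real x 2) (fun n => aux_term_bound x 2 n)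

omit [NormedAlgebra ℂ A] [CompleteSpace A] in
lemma aux_pow_sub_pow (x y : A) (M : ℝ) (hx : ‖x‖ ≤ M) (hy : ‖y‖ ≤ M) (hM : 1 ≤ M) :
    ∀ n : ℕ, ‖x ^ n - y ^ n‖ ≤ n * M ^ n * ‖x - y‖ := by
  intro n
  induction n with
  | zero => simp
  | succ n ih =>
    have key : x ^ (n + 1) - y ^ (n + 1) = x * (x ^ n - y ^ n) + (x - y) * y ^ n := by
      rw [pow_succ', pow_succ', mul_sub, sub_mul]; abel
    have hMp : M ^ n ≤ M ^ (n + 1) := pow_le_pow_right₀ hM (Nat.le_succ n)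
    calc ‖x ^ (n + 1) - y ^ (n + 1)‖
        ≤ ‖x * (x ^ n - y ^ n)‖ + ‖(x - y) * y ^ n‖ := by rw [key]; exact norm_add_le _ _
      _ ≤ ‖x‖ * ‖x ^ n - y ^ n‖ + ‖x - y‖ * ‖y ^ n‖ :=
          add_le_add (norm_mul_le _ _) (norm_mul_le _ _)
      _ ≤ M * (n * M ^ n * ‖x - y‖) + ‖x - y‖ * M ^ n := by
          apply add_le_add
          · exact mul_le_mul hx ih (norm_nonneg _) (le_trans zero_le_one hM)
          · exact mul_le_mul_of_nonneg_left
              ((norm_pow_le y n).trans (pow_le_pow_left₀ (norm_nonneg _) hy n)) (norm_nonneg _)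
      _ = n * M ^ (n + 1) * ‖x - y‖ + M ^ n * ‖x - y‖ := by ring
      _ ≤ n * M ^ (n + 1) * ‖x - y‖ + M ^ (n + 1) * ‖x - y‖ :=
          add_le_add_right (mul_le_mul_of_nonneg_right hMp (norm_nonneg _)) _
      _ = (n + 1 : ℕ) * M ^ (n + 1) * ‖x - y‖ := by push_cast; ring

/-- remainder bound for `exp (s • v)` scaled. -/
lemma aux_R (v : A) {s t : ℝ} (hs : 0 ≤ s) (hst : s ≤ t) :
    ‖exp (s • v) - 1 - s • v‖ ≤ (‖v‖ ^ 2 * Real.exp (t * ‖v‖)) * s ^ 2 := by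
  have h := aux_norm_exp_sub_one_sub_le (s • v)
  have hn : ‖s • v‖ = s * ‖v‖ := by rw [norm_smul, Real.norm_of_nonneg hs]
  rw [hn] at h
  refine h.trans ?_
  have he : Real.exp (s * ‖v‖) ≤ Real.exp (t * ‖v‖) :=
    Real.exp_le_exp.mpr (mul_le_mul_of_nonneg_right hst (norm_nonneg _))
  calc (s * ‖v‖) ^ 2 * Real.exp (s * ‖v‖)
      ≤ (s * ‖v‖) ^ 2 * Real.exp (t * ‖v‖) := by
        exact mul_le_mul_of_nonneg_left he (by positivity)
    _ = (‖v‖ ^ 2 * Real.exp (t * ‖v‖)) * s ^ 2 := by ring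

lemma aux_R1 (v : A) {s t : ℝ} (hs : 0 ≤ s) (hst : s ≤ t) :
    ‖exp (s • v) - 1‖ ≤ (‖v‖ * Real.exp (t * ‖v‖)) * s := by
  have h := aux_norm_exp_sub_one_le (s • v)
  have hn : ‖s • v‖ = s * ‖v‖ := by rw [norm_smul, Real.norm_of_nonneg hs]
  rw [hn] at h
  refine h.trans ?_
  have he : Real.exp (s * ‖v‖) ≤ Real.exp (t * ‖v‖) :=
    Real.exp_le_exp.mpr (mul_le_mul_of_nonneg_right hst (norm_nonneg _))
  calc s * ‖v‖ * Real.exp (s * ‖v‖)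
      ≤ s * ‖v‖ * Real.exp (t * ‖v‖) := by
        exact mul_le_mul_of_nonneg_left he (by positivity)
    _ = (‖v‖ * Real.exp (t * ‖v‖)) * s := by ring

end AuxTrotter

/-- The affine-combination Trotter product (Section 1 and Section 4.2): for complex
coefficients `κ + λ = 1`, `(κ exp (t a / n) + λ exp (t b / n))ⁿ → exp (t (κ a + λ b))`
in norm. -/
theorem stmt_10 {A : Type*} [NormedRing A] [NormOneClass A] [NormedAlgebra ℂ A]
    [CompleteSpace A] (a b : A) (κ lam : ℂ) (hκlam : κ + lam = 1) (t : ℝ) (ht : 0 ≤ t) :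
    Tendsto
      (fun n : ℕ =>
        (κ • NormedSpace.exp ((t / n) • a) + lam • NormedSpace.exp ((t / n) • b)) ^ n)
      atTop (nhds (NormedSpace.exp (t • (κ • a + lam • b)))) := by
  set c : A := κ • a + lam • b with hc
  set C : ℝ := ‖κ‖ * (‖a‖ ^ 2 * Real.exp (t * ‖a‖)) + ‖lam‖ * (‖b‖ ^ 2 * Real.exp (t * ‖b‖))
      + ‖c‖ ^ 2 * Real.exp (t * ‖c‖) with hC
  set L : ℝ := ‖κ‖ * (‖a‖ * Real.exp (t * ‖a‖)) + ‖lam‖ * (‖b‖ * Real.exp (t * ‖b‖)) + ‖c‖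
    with hL
  have hC0 : 0 ≤ C := by positivity
  have hL0 : 0 ≤ L := by positivity
  have key : ∀ n : ℕ, 1 ≤ n →
      ‖(κ • exp ((t / n) • a) + lam • exp ((t / n) • b)) ^ n - exp (t • c)‖
        ≤ (Real.exp (t * L) * (C * t ^ 2)) * (1 / n) := by
    intro n hn
    have hnR : (0:ℝ) < n := by exact_mod_cast hn
    set s : ℝ := t / n with hsdef
    have hs : 0 ≤ s := div_nonneg ht hnR.le
    have hst : s ≤ t := by
      rw [hsdef, div_le_iff₀ hnR]
      nlinarith [ht, hnR, (show (1:ℝ) ≤ n by exact_mod_cast hn)]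
    have hns : (n : ℝ) * s = t := by
      rw [hsdef]; field_simp
    set X : A := κ • exp (s • a) + lam • exp (s • b) with hX
    set Y : A := exp (s • c) with hY
    -- step 1: ‖X - Y‖ ≤ C * s ^ 2
    have hdiff : ‖X - Y‖ ≤ C * s ^ 2 := by
      have hid : X - Y = κ • (exp (s • a) - 1 - s • a) + lam • (exp (s • b) - 1 - s • b)
          - (exp (s • c) - 1 - s • (κ • a + lam • b)) := by
        rw [hX, hY, hc]
        linear_combination (norm := module) hκlam • (1 : A)
      rw [hid]
      have h1 := aux_R a hs hst
      have h2 := aux_R b hs hst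
      have h3 := aux_R c hs hst
      rw [← hc]
      calc ‖κ • (exp (s • a) - 1 - s • a) + lam • (exp (s • b) - 1 - s • b)
            - (exp (s • c) - 1 - s • c)‖
          ≤ ‖κ • (exp (s • a) - 1 - s • a) + lam • (exp (s • b) - 1 - s • b)‖
            + ‖exp (s • c) - 1 - s • c‖ := norm_sub_le _ _
        _ ≤ (‖κ • (exp (s • a) - 1 - s • a)‖ + ‖lam • (exp (s • b) - 1 - s • b)‖)
            + ‖exp (s • c) - 1 - s • c‖ := by
            exact add_le_add_left (norm_add_le _ _) _
        _ ≤ (‖κ‖ * ((‖a‖ ^ 2 * Real.exp (t * ‖a‖)) * s ^ 2)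
              + ‖lam‖ * ((‖b‖ ^ 2 * Real.exp (t * ‖b‖)) * s ^ 2))
            + (‖c‖ ^ 2 * Real.exp (t * ‖c‖)) * s ^ 2 := by
            refine add_le_add (add_le_add ?_ ?_) h3
            · rw [norm_smul]; exact mul_le_mul_of_nonneg_left h1 (norm_nonneg _)
            · rw [norm_smul]; exact mul_le_mul_of_nonneg_left h2 (norm_nonneg _)
        _ = C * s ^ 2 := by rw [hC]; ring
    -- step 2: norm bounds
    have hMX : ‖X‖ ≤ Real.exp (s * L) := by
      have hid : X = 1 + (κ • (exp (s • a) - 1) + lam • (exp (s • b) - 1)) := by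
        rw [hX]
        linear_combination (norm := module) hκlam • (1 : A)
      have h1 := aux_R1 a hs hst
      have h2 := aux_R1 b hs hst
      calc ‖X‖ ≤ ‖(1 : A)‖ + (‖κ • (exp (s • a) - 1)‖ + ‖lam • (exp (s • b) - 1)‖) := by
            rw [hid]
            exact (norm_add_le _ _).trans (add_le_add_right (norm_add_le _ _) _)
        _ ≤ 1 + s * L := by
            rw [norm_one]
            refine add_le_add_right ?_ 1
            have e1 : ‖κ • (exp (s • a) - 1)‖ ≤ ‖κ‖ * ((‖a‖ * Real.exp (t * ‖a‖)) * s) := by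
              rw [norm_smul]; exact mul_le_mul_of_nonneg_left h1 (norm_nonneg _)
            have e2 : ‖lam • (exp (s • b) - 1)‖ ≤ ‖lam‖ * ((‖b‖ * Real.exp (t * ‖b‖)) * s) := by
              rw [norm_smul]; exact mul_le_mul_of_nonneg_left h2 (norm_nonneg _)
            have e3 : 0 ≤ s * ‖c‖ := by positivity
            calc ‖κ • (exp (s • a) - 1)‖ + ‖lam • (exp (s • b) - 1)‖
                ≤ ‖κ‖ * ((‖a‖ * Real.exp (t * ‖a‖)) * s)
                  + ‖lam‖ * ((‖b‖ * Real.exp (t * ‖b‖)) * s) := add_le_add e1 e2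
              _ ≤ s * L := by rw [hL]; nlinarith
        _ ≤ Real.exp (s * L) := by
            have := Real.add_one_le_exp (s * L)
            linarith
    have hMY : ‖Y‖ ≤ Real.exp (s * L) := by
      refine (aux_norm_exp_le _).trans ?_
      apply Real.exp_le_exp.mpr
      rw [norm_smul, Real.norm_of_nonneg hs]
      have h4 : (0:ℝ) ≤ ‖κ‖ * (‖a‖ * Real.exp (t * ‖a‖)) + ‖lam‖ * (‖b‖ * Real.exp (t * ‖b‖)) := by positivity
      have : ‖c‖ ≤ L := by rw [hL]; linarith
      nlinarith
    have hM1 : (1:ℝ) ≤ Real.exp (s * L) := Real.one_le_exp (by positivity)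
    -- step 3: Y ^ n = exp (t • c)
    have hYn : Y ^ n = exp (t • c) := by
      letI : NormedAlgebra ℚ A := NormedAlgebra.restrictScalars ℚ ℂ A
      rw [hY, ← exp_nsmul]
      congr 1
      rw [← Nat.cast_smul_eq_nsmul ℝ, smul_smul, hns]
    -- step 4
    have hpow := aux_pow_sub_pow X Y (Real.exp (s * L)) hMX hMY hM1 n
    rw [hYn] at hpow
    have hexp : Real.exp (s * L) ^ n = Real.exp (t * L) := by
      rw [← Real.exp_nat_mul]; congr 1; rw [← hns]; ring
    refine hpow.trans ?_
    rw [hexp]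
    calc (n : ℝ) * Real.exp (t * L) * ‖X - Y‖
        ≤ (n : ℝ) * Real.exp (t * L) * (C * s ^ 2) := by
          exact mul_le_mul_of_nonneg_left hdiff (by positivity)
      _ = Real.exp (t * L) * (C * ((n : ℝ) * s * s)) := by ring
      _ = Real.exp (t * L) * (C * (t * s)) := by rw [hns]
      _ = (Real.exp (t * L) * (C * t ^ 2)) * (1 / n) := by
          have hts : t * s = t ^ 2 * (1 / (n:ℝ)) := by rw [hsdef]; ring
          rw [hts]; ring
  -- conclude
  rw [tendsto_iff_norm_sub_tendsto_zero]
  apply squeeze_zero' (Eventually.of_forall fun n => norm_nonneg _)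
    (eventually_atTop.mpr ⟨1, fun n hn => key n hn⟩)
  have h0 : Tendsto (fun n : ℕ => (Real.exp (t * L) * (C * t ^ 2)) * (1 / (n:ℝ)))
      atTop (nhds ((Real.exp (t * L) * (C * t ^ 2)) * 0)) :=
    tendsto_one_div_atTop_nhds_zero_nat.const_mul _
  simpa using h0
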